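/- Let T be a rooted phylogenetic X-tree whose positive edge lengths satisfy the ultrametric condition, let A ⊆ X with |A| = k, and suppose k is a branching value of T. Then A is a size-k maxPD set if and only if A contains exactly one leaf from each connected component of the forest T[R(d_k)]. -/

import Mathlib

/-!
Rooted phylogenetic `X`-trees with positive edge lengths.

A tree on a finite vertex type `V` is encoded by its parent function: the root
has no parent, every other vertex has one, and iterating the parent function
reaches the root.  The edge into a non-root vertex `v` has length `len v`, and
`hgt v` is the distance from the root to `v`.  Leaves are the vertices with no
children; the taxon set `X` of the paper is the set `leaves` of leaves.
Every non-leaf, non-root vertex has out-degree (number of children) at least 2.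
-/

noncomputable section

attribute [local instance] Classical.propDecidable

structure PhyloTree (V : Type) [Fintype V] [DecidableEq V] where
  root : V
  parent : V → Option V
  len : V → ℝ
  hgt : V → ℝ
  parent_root : parent root = none
  parent_isSome : ∀ v, v ≠ root → (parent v).isSome
  reaches_root : ∀ v, Relation.ReflTransGen (fun a b => parent a = some b) v root
  hgt_root : hgt root = 0
  hgt_eq : ∀ v u, parent v = some u → hgt v = hgt u + len v
  len_pos : ∀ v, v ≠ root → 0 < len v
  outdeg_ge_two : ∀ v, v ≠ root → (∃ u, parent u = some v) →
    2 ≤ Set.ncard {u | parent u = some v}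

namespace PhyloTree

variable {V : Type} [Fintype V] [DecidableEq V]

/-- `T.step a b` : `b` is the parent of `a`. -/
def step (T : PhyloTree V) (a b : V) : Prop := T.parent a = some b

/-- `T.anc u v` : `u` is an ancestor of `v`, i.e. `u` lies on the (unique) path
from the root to `v` (reflexively). -/
def anc (T : PhyloTree V) (u v : V) : Prop := Relation.ReflTransGen T.step v u

/-- a leaf is a vertex with no children. -/
def IsLeaf (T : PhyloTree V) (v : V) : Prop := ∀ u, T.parent u ≠ some v

/-- the leaf set (the taxon set `X`). -/
def leaves (T : PhyloTree V) : Set V := {v | T.IsLeaf v}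

/-- Phylogenetic diversity of a set `Y`: the total length of all edges `e`
whose set of descendant leaves meets `Y` (the edge into a non-root vertex `v`
has length `T.len v`). -/
def PD (T : PhyloTree V) (Y : Set V) : ℝ :=
  ∑ v : V, if v ≠ T.root ∧ ∃ x ∈ Y, T.IsLeaf x ∧ T.anc v x then T.len v else 0

/-- the ultrametric condition: all leaves are at the same distance from the root. -/
def Ultrametric (T : PhyloTree V) : Prop :=
  ∀ x y, T.IsLeaf x → T.IsLeaf y → T.hgt x = T.hgt y

/-- `R d`: the set of vertices within distance `d` above some leaf. -/
def R (T : PhyloTree V) (d : ℝ) : Set V :=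
  {v | ∃ x, T.IsLeaf x ∧ T.anc v x ∧ T.hgt x - T.hgt v ≤ d}

/-- adjacency in the forest induced by `T` on a vertex set `S`. -/
def adjIn (T : PhyloTree V) (S : Set V) (u v : V) : Prop :=
  u ∈ S ∧ v ∈ S ∧ (T.parent u = some v ∨ T.parent v = some u)

/-- the connected components of the forest induced by `T` on `S`. -/
def components (T : PhyloTree V) (S : Set V) : Set (Set V) :=
  {C | ∃ v ∈ S, C = S ∩ {u | Relation.ReflTransGen (T.adjIn S) v u}}

/-- `c d`: the number of connected components of the forest `T[R(d)]`. -/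
def ccount (T : PhyloTree V) (d : ℝ) : ℕ := (T.components (T.R d)).ncard

/-- `k` is a branching value if `T[R(d)]` has exactly `k` components for some `d ≥ 0`. -/
def IsBranchingValue (T : PhyloTree V) (k : ℕ) : Prop := ∃ d : ℝ, 0 ≤ d ∧ T.ccount d = k

/-- the branching distance `d_k = min {d : c(d) = k}`. -/
def branchDist (T : PhyloTree V) (k : ℕ) : ℝ := sInf {d | 0 ≤ d ∧ T.ccount d = k}

/-- `k⁻`: the largest branching value `≤ k`. -/
def kminus (T : PhyloTree V) (k : ℕ) : ℕ := sSup {j | j ≤ k ∧ T.IsBranchingValue j}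

/-- `k⁺`: the smallest branching value `≥ k`. -/
def kplus (T : PhyloTree V) (k : ℕ) : ℕ := sInf {j | k ≤ j ∧ T.IsBranchingValue j}

/-- `A` is a size-`k` maxPD set. -/
def IsMaxPD (T : PhyloTree V) (k : ℕ) (A : Set V) : Prop :=
  A ⊆ T.leaves ∧ A.ncard = k ∧ ∀ Y ⊆ T.leaves, Y.ncard = k → T.PD Y ≤ T.PD A

/-- `A` is a size-`k` minPD set. -/
def IsMinPD (T : PhyloTree V) (k : ℕ) (A : Set V) : Prop :=
  A ⊆ T.leaves ∧ A.ncard = k ∧ ∀ Y ⊆ T.leaves, Y.ncard = k → T.PD A ≤ T.PD Y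

/-- `m T k`: the number of size-`k` maxPD sets of `T`. -/
def m (T : PhyloTree V) (k : ℕ) : ℕ := {A : Set V | T.IsMaxPD k A}.ncard

/-- `T` is binary: every non-leaf vertex has exactly two children. -/
def Binary (T : PhyloTree V) : Prop :=
  ∀ v, ¬ T.IsLeaf v → Set.ncard {u | T.parent u = some v} = 2

section Aux

variable (T : PhyloTree V)

lemma step_ne_root {a b : V} (h : T.step a b) : a ≠ T.root := by
  rintro rfl; rw [step, T.parent_root] at h; cases h

lemma anc_refl (v : V) : T.anc v v := Relation.ReflTransGen.refl

lemma anc_trans {u v w : V} (h1 : T.anc u v) (h2 : T.anc v w) : T.anc u w :=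
  Relation.ReflTransGen.trans h2 h1

lemma anc_root (v : V) : T.anc T.root v := T.reaches_root v

lemma eq_root_of_anc_root {v : V} (h : T.anc v T.root) : v = T.root := by
  rcases Relation.ReflTransGen.cases_head h with h | ⟨c, hc, _⟩
  · exact h.symm
  · exact absurd rfl (T.step_ne_root hc)

lemma step_hgt {a b : V} (h : T.step a b) : T.hgt a = T.hgt b + T.len a :=
  T.hgt_eq a b h

lemma step_hgt_lt {a b : V} (h : T.step a b) : T.hgt b < T.hgt a := by
  have := T.step_hgt h
  have := T.len_pos a (T.step_ne_root h)
  linarith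

lemma hgt_le_of_anc {u v : V} (h : T.anc u v) : T.hgt u ≤ T.hgt v := by
  induction h with
  | refl => exact le_refl _
  | tail _ hstep ih => exact le_trans (le_of_lt (T.step_hgt_lt hstep)) ih

lemma anc_antisymm {u v : V} (h1 : T.anc u v) (h2 : T.anc v u) : u = v := by
  rcases Relation.ReflTransGen.cases_head h1 with h | ⟨c, hc, hcu⟩
  · exact h.symm
  · have l1 := T.hgt_le_of_anc h2
    have l2 : T.hgt u ≤ T.hgt c := T.hgt_le_of_anc hcu
    exfalso; linarith [T.step_hgt_lt hc]

lemma hgt_lt_of_anc {u v : V} (h : T.anc u v) (hne : u ≠ v) : T.hgt u < T.hgt v := by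
  rcases Relation.ReflTransGen.cases_head h with h | ⟨c, hc, hcu⟩
  · exact absurd h.symm hne
  · exact lt_of_le_of_lt (T.hgt_le_of_anc hcu) (T.step_hgt_lt hc)

lemma parent_anc {v p : V} (h : T.parent v = some p) : T.anc p v :=
  Relation.ReflTransGen.single h

lemma anc_parent_of_ne {u v p : V} (h : T.anc u v) (hne : u ≠ v)
    (hp : T.parent v = some p) : T.anc u p := by
  rcases Relation.ReflTransGen.cases_head h with h | ⟨c, hc, hcu⟩
  · exact absurd h.symm hne
  · have : c = p := by rw [step, hp] at hc; exact Option.some_injective _ hc.symm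
    subst this; exact hcu

lemma anc_comparable {u v x : V} (h1 : T.anc u x) (h2 : T.anc v x) :
    T.anc u v ∨ T.anc v u := by
  induction h1 with
  | refl => right; exact h2
  | @tail b u' hxb hstep ih =>
    rcases ih with hbv | hvb
    · left; exact T.anc_trans (T.parent_anc hstep) hbv
    · by_cases hvb' : v = b
      · subst hvb'; left; exact T.parent_anc hstep
      · right; exact T.anc_parent_of_ne hvb hvb' hstep

lemma exists_leaf_desc (v : V) : ∃ x, T.IsLeaf x ∧ T.anc v x := by
  have key : ∀ n (v : V), (Finset.univ.filter (fun u => T.hgt v < T.hgt u)).card = n →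
      ∃ x, T.IsLeaf x ∧ T.anc v x := by
    intro n
    induction n using Nat.strong_induction_on with
    | _ n ih =>
      intro v hn
      by_cases hv : T.IsLeaf v
      · exact ⟨v, hv, T.anc_refl v⟩
      · simp only [IsLeaf, not_forall, not_not] at hv
        obtain ⟨u, hu⟩ := hv
        have hstep : T.step u v := hu
        have hlt : T.hgt v < T.hgt u := T.step_hgt_lt hstep
        have hsub : (Finset.univ.filter (fun w => T.hgt u < T.hgt w)) ⊂
            (Finset.univ.filter (fun w => T.hgt v < T.hgt w)) := by
          constructor
          · intro w hw
            simp only [Finset.mem_filter, Finset.mem_univ, true_and] at hw ⊢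
            linarith
          · intro hcon
            have := hcon (by simp [hlt] : u ∈ Finset.univ.filter (fun w => T.hgt v < T.hgt w))
            simp at this
        have hcard : (Finset.univ.filter (fun w => T.hgt u < T.hgt w)).card < n := by
          rw [← hn]; exact Finset.card_lt_card hsub
        obtain ⟨x, hx, hax⟩ := ih _ hcard u rfl
        exact ⟨x, hx, T.anc_trans (T.parent_anc hstep) hax⟩
  exact key _ v rfl

lemma hgt_nonneg (v : V) : 0 ≤ T.hgt v := by
  have := T.hgt_le_of_anc (T.anc_root v)
  rwa [T.hgt_root] at this


/-- all vertices that are ancestors of some leaf in `Y`. -/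
def ancSet (Y : Set V) : Set V := {v | ∃ x ∈ Y, T.IsLeaf x ∧ T.anc v x}

/-- sum of edge lengths over a set of vertices. -/
def sumlen (S : Set V) : ℝ := ∑ v : V, S.indicator T.len v

lemma sumlen_congr {S S' : Set V} (h : S = S') : T.sumlen S = T.sumlen S' := by rw [h]

lemma sumlen_empty : T.sumlen (∅ : Set V) = 0 := by
  simp [sumlen]

lemma sumlen_insert {S : Set V} {w : V} (hw : w ∉ S) :
    T.sumlen (insert w S) = T.len w + T.sumlen S := by
  classical
  simp only [sumlen]
  have step1 : (∑ v : V, (insert w S).indicator T.len v)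
      = ∑ v : V, ((if v = w then T.len v else 0) + S.indicator T.len v) := by
    apply Finset.sum_congr rfl
    intro v _
    by_cases h1 : v = w
    · subst h1
      rw [Set.indicator_of_mem (Set.mem_insert v S), if_pos rfl,
        Set.indicator_of_notMem hw]
      ring
    · rw [if_neg h1]
      by_cases h2 : v ∈ S
      · rw [Set.indicator_of_mem h2, Set.indicator_of_mem (Set.mem_insert_of_mem w h2)]
        ring
      · rw [Set.indicator_of_notMem h2, Set.indicator_of_notMem
          (by simp [Set.mem_insert_iff, h1, h2])]
        ring
  rw [step1, Finset.sum_add_distrib, Finset.sum_ite_eq' Finset.univ w T.len]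
  simp

lemma PD_eq_sumlen (Y : Set V) : T.PD Y = T.sumlen (T.ancSet Y \ {T.root}) := by
  unfold PD sumlen
  apply Finset.sum_congr rfl
  intro v _
  by_cases h : v ∈ T.ancSet Y \ {T.root}
  · rw [Set.indicator_of_mem h, if_pos]
    obtain ⟨h1, h2⟩ := h
    exact ⟨h2, h1⟩
  · rw [Set.indicator_of_notMem h, if_neg]
    intro ⟨h1, h2⟩
    exact h ⟨h2, h1⟩

/-- the segment of the path strictly below `w` down to `a` (inclusive). -/
def seg (w a : V) : Set V := {v | T.anc w v ∧ T.anc v a ∧ v ≠ w}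

lemma seg_sum {w a : V} (h : T.anc w a) :
    T.sumlen (T.seg w a) = T.hgt a - T.hgt w := by
  induction h with
  | refl =>
    have : T.seg a a = (∅ : Set V) := by
      ext v; simp only [seg, Set.mem_setOf_eq, Set.mem_empty_iff_false, iff_false]
      rintro ⟨h1, h2, h3⟩; exact h3 (T.anc_antisymm h2 h1)
    rw [this, T.sumlen_empty]; ring
  | @tail b c hab hstep ih =>
    -- hab : anc b a (RTG step a b), hstep : step b c, c = parent b
    have hba : T.anc b a := hab
    have hkey : T.seg c a = insert b (T.seg b a) := by
      ext v
      simp only [seg, Set.mem_setOf_eq, Set.mem_insert_iff]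
      constructor
      · rintro ⟨hcv, hva, hvc⟩
        by_cases hvb' : v = b
        · exact Or.inl hvb'
        · rcases T.anc_comparable hva hba with hvb | hbv
          · have : T.anc v c := T.anc_parent_of_ne hvb hvb' hstep
            exact absurd (T.anc_antisymm hcv this).symm hvc
          · right
            exact ⟨hbv, hva, hvb'⟩
      · rintro (rfl | ⟨hbv, hva, hvb⟩)
        · refine ⟨T.parent_anc hstep, hba, ?_⟩
          intro h
          exact absurd (h ▸ T.step_hgt_lt hstep) (lt_irrefl _)
        · refine ⟨T.anc_trans (T.parent_anc hstep) hbv, hva, ?_⟩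
          intro h
          rw [h] at hbv
          exact absurd (T.step_hgt_lt hstep) (not_lt.mpr (T.hgt_le_of_anc hbv))
    have hbnot : b ∉ T.seg b a := by
      simp [seg]
    rw [hkey, T.sumlen_insert hbnot, ih, T.step_hgt hstep]
    ring

lemma ancSet_insert {a : V} (ha : T.IsLeaf a) (Y : Set V) :
    T.ancSet (insert a Y) = {v | T.anc v a} ∪ T.ancSet Y := by
  ext v
  simp only [ancSet, Set.mem_setOf_eq, Set.mem_union, Set.mem_insert_iff]
  constructor
  · rintro ⟨x, (rfl | hx), hl, hanc⟩
    · exact Or.inl hanc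
    · exact Or.inr ⟨x, hx, hl, hanc⟩
  · rintro (h | ⟨x, hx, hl, hanc⟩)
    · exact ⟨a, Or.inl rfl, ha, h⟩
    · exact ⟨x, Or.inr hx, hl, hanc⟩

/-- the set of candidate attachment points for leaf `a` over `Y`. -/
def Zset (a : V) (Y : Set V) : Set V :=
  {v | T.anc v a ∧ (v = T.root ∨ v ∈ T.ancSet Y)}

lemma Zset_nonempty (a : V) (Y : Set V) : (T.Zset a Y).Nonempty :=
  ⟨T.root, T.anc_root a, Or.inl rfl⟩

/-- a maximal-height element of `Zset a Y`. -/
lemma exists_zmax (a : V) (Y : Set V) :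
    ∃ z ∈ T.Zset a Y, ∀ v ∈ T.Zset a Y, T.hgt v ≤ T.hgt z := by
  classical
  have hne : (Finset.univ.filter (fun v => v ∈ T.Zset a Y)).Nonempty := by
    obtain ⟨z, hz⟩ := T.Zset_nonempty a Y
    exact ⟨z, by simp [hz]⟩
  obtain ⟨z, hz, hmax⟩ := Finset.exists_max_image _ T.hgt hne
  refine ⟨z, by simpa using hz, fun v hv => hmax v (by simpa using hv)⟩

lemma diff_eq_seg {a : V} (Y : Set V) {z : V}
    (hz : z ∈ T.Zset a Y) (hzmax : ∀ v ∈ T.Zset a Y, T.hgt v ≤ T.hgt z) :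
    (({v | T.anc v a} \ T.ancSet Y : Set V) \ {T.root}) = T.seg z a := by
  obtain ⟨hza, hzor⟩ := hz
  ext v
  simp only [Set.mem_diff, Set.mem_setOf_eq, Set.mem_singleton_iff, seg]
  constructor
  · rintro ⟨⟨hva, hvY⟩, hvroot⟩
    have hvz : v ≠ z := by
      rintro rfl
      rcases hzor with h | h
      · exact hvroot h
      · exact hvY h
    refine ⟨?_, hva, hvz⟩
    rcases T.anc_comparable hza hva with hzv | hvz'
    · exact hzv
    · -- v is a proper ancestor of z; show v ∈ Zset, contradiction with v ∉ ancSet etc.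
      exfalso
      rcases hzor with rfl | ⟨x, hx, hl, hzx⟩
      · exact hvroot (T.eq_root_of_anc_root hvz')
      · exact hvY ⟨x, hx, hl, T.anc_trans hvz' hzx⟩
  · rintro ⟨hzv, hva, hvz⟩
    have hlt : T.hgt z < T.hgt v := T.hgt_lt_of_anc hzv (Ne.symm hvz)
    have hvnot : v ∉ T.Zset a Y := fun hmem => absurd (hzmax v hmem) (not_le.mpr hlt)
    refine ⟨⟨hva, fun hY => hvnot ⟨hva, Or.inr hY⟩⟩, fun hroot => hvnot ⟨hva, Or.inl hroot⟩⟩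

lemma PD_insert {a : V} (ha : T.IsLeaf a) (Y : Set V) {z : V}
    (hz : z ∈ T.Zset a Y) (hzmax : ∀ v ∈ T.Zset a Y, T.hgt v ≤ T.hgt z) :
    T.PD (insert a Y) = T.PD Y + (T.hgt a - T.hgt z) := by
  rw [T.PD_eq_sumlen, T.PD_eq_sumlen, ← T.seg_sum hz.1, ← T.diff_eq_seg Y hz hzmax]
  unfold sumlen
  rw [← Finset.sum_add_distrib]
  apply Finset.sum_congr rfl
  intro v _
  by_cases h1 : v ∈ T.ancSet Y \ {T.root}
  · have h2 : v ∈ T.ancSet (insert a Y) \ {T.root} := by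
      rw [T.ancSet_insert ha]
      exact ⟨Or.inr h1.1, h1.2⟩
    have h3 : v ∉ (({v | T.anc v a} \ T.ancSet Y : Set V) \ {T.root}) := by
      rintro ⟨⟨_, hvY⟩, _⟩; exact hvY h1.1
    rw [Set.indicator_of_mem h1, Set.indicator_of_mem h2, Set.indicator_of_notMem h3]
    ring
  · by_cases h2 : v ∈ (({v | T.anc v a} \ T.ancSet Y : Set V) \ {T.root})
    · have h3 : v ∈ T.ancSet (insert a Y) \ {T.root} := by
        rw [T.ancSet_insert ha]
        exact ⟨Or.inl h2.1.1, h2.2⟩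
      rw [Set.indicator_of_mem h3, Set.indicator_of_mem h2, Set.indicator_of_notMem h1]
      ring
    · have h3 : v ∉ T.ancSet (insert a Y) \ {T.root} := by
        rw [T.ancSet_insert ha]
        rintro ⟨(hva | hvY), hvroot⟩
        · exact h2 ⟨⟨hva, fun hY => h1 ⟨hY, hvroot⟩⟩, hvroot⟩
        · exact h1 ⟨hvY, hvroot⟩
      rw [Set.indicator_of_notMem h1, Set.indicator_of_notMem h2,
        Set.indicator_of_notMem h3]
      ring


section Components

variable (h : ℝ)

/-- minimal vertices of `R d`: the roots of the components. -/
def Mset (d : ℝ) : Set V :=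
  {m | m ∈ T.R d ∧ ∀ p, T.parent m = some p → p ∉ T.R d}

/-- the set of descendants of `m`. -/
def comp (m : V) : Set V := {u | T.anc m u}

variable {T}

lemma mem_R_iff (hl : ∀ x, T.IsLeaf x → T.hgt x = h) (d : ℝ) (v : V) :
    v ∈ T.R d ↔ h - T.hgt v ≤ d := by
  constructor
  · rintro ⟨x, hx, hanc, hle⟩; rw [hl x hx] at hle; exact hle
  · intro hle
    obtain ⟨x, hx, hanc⟩ := T.exists_leaf_desc v
    exact ⟨x, hx, hanc, by rw [hl x hx]; exact hle⟩

lemma R_desc_closed (hl : ∀ x, T.IsLeaf x → T.hgt x = h) {d : ℝ} {u v : V}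
    (hu : u ∈ T.R d) (hanc : T.anc u v) : v ∈ T.R d := by
  rw [mem_R_iff h hl] at hu ⊢
  have := T.hgt_le_of_anc hanc
  linarith

lemma exists_mroot (hl : ∀ x, T.IsLeaf x → T.hgt x = h) {d : ℝ} {v : V}
    (hv : v ∈ T.R d) : ∃ m, m ∈ T.Mset d ∧ T.anc m v := by
  classical
  have hne : (Finset.univ.filter (fun u => u ∈ T.R d ∧ T.anc u v)).Nonempty :=
    ⟨v, by simp [hv, T.anc_refl]⟩
  obtain ⟨m, hm, hmin⟩ := Finset.exists_min_image _ T.hgt hne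
  simp only [Finset.mem_filter, Finset.mem_univ, true_and] at hm
  refine ⟨m, ⟨hm.1, fun p hp hpR => ?_⟩, hm.2⟩
  have hpv : T.anc p v := T.anc_trans (T.parent_anc hp) hm.2
  have := hmin p (by simp [hpR, hpv])
  have := T.step_hgt_lt (hp : T.step m p)
  linarith

lemma mset_anc_eq (hl : ∀ x, T.IsLeaf x → T.hgt x = h) {d : ℝ} {m₁ m₂ : V}
    (h₁ : m₁ ∈ T.Mset d) (h₂ : m₂ ∈ T.Mset d) (hanc : T.anc m₁ m₂) : m₁ = m₂ := by
  by_contra hne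
  by_cases hroot : m₂ = T.root
  · subst hroot
    exact hne (T.eq_root_of_anc_root hanc)
  · obtain ⟨p, hp⟩ := Option.isSome_iff_exists.mp (T.parent_isSome m₂ hroot)
    have hanc_p : T.anc m₁ p := T.anc_parent_of_ne hanc hne hp
    have hpR : p ∈ T.R d := by
      rw [mem_R_iff h hl]
      have h1 := (mem_R_iff h hl d m₁).mp h₁.1
      have := T.hgt_le_of_anc hanc_p
      linarith
    exact h₂.2 p hp hpR

lemma mroot_unique (hl : ∀ x, T.IsLeaf x → T.hgt x = h) {d : ℝ} {m₁ m₂ v : V}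
    (h₁ : m₁ ∈ T.Mset d) (h₂ : m₂ ∈ T.Mset d)
    (hv₁ : T.anc m₁ v) (hv₂ : T.anc m₂ v) : m₁ = m₂ := by
  rcases T.anc_comparable hv₁ hv₂ with hc | hc
  · exact mset_anc_eq h hl h₁ h₂ hc
  · exact (mset_anc_eq h hl h₂ h₁ hc).symm

lemma comp_subset_R (hl : ∀ x, T.IsLeaf x → T.hgt x = h) {d : ℝ} {m : V}
    (hm : m ∈ T.R d) : T.comp m ⊆ T.R d :=
  fun _ hu => R_desc_closed h hl hm hu

lemma reach_of_comp (hl : ∀ x, T.IsLeaf x → T.hgt x = h) {d : ℝ} {m v : V}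
    (hm : m ∈ T.R d) (hv : v ∈ T.comp m) :
    Relation.ReflTransGen (T.adjIn (T.R d)) m v := by
  have : ∀ u : V, Relation.ReflTransGen T.step u m →
      Relation.ReflTransGen (T.adjIn (T.R d)) m u := by
    intro u hu
    induction hu using Relation.ReflTransGen.head_induction_on with
    | refl => exact Relation.ReflTransGen.refl
    | head hstep htail ih =>
      rename_i u' c
      have hcm : T.anc m c := htail
      have hcR : c ∈ T.R d := R_desc_closed h hl hm hcm
      have hu'R : u' ∈ T.R d := R_desc_closed h hl hcR (T.parent_anc hstep)
      exact Relation.ReflTransGen.tail ih ⟨hcR, hu'R, Or.inr hstep⟩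
  exact this v hv

lemma comp_of_reach (hl : ∀ x, T.IsLeaf x → T.hgt x = h) {d : ℝ} {m v : V}
    (hm : m ∈ T.Mset d) (hv : Relation.ReflTransGen (T.adjIn (T.R d)) m v) :
    v ∈ T.comp m := by
  induction hv with
  | refl => exact T.anc_refl m
  | tail hmu hadj ih =>
    rename_i u w
    rcases hadj.2.2 with hpar | hpar
    · -- parent u = some w
      by_cases hum : u = m
      · subst hum
        exact absurd hadj.2.1 (hm.2 w hpar)
      · exact T.anc_parent_of_ne ih (Ne.symm hum) hpar
    · -- parent w = some u
      exact T.anc_trans ih (T.parent_anc hpar)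

lemma adjIn_symm {S : Set V} : Symmetric (T.adjIn S) := by
  rintro u v ⟨h1, h2, h3⟩
  exact ⟨h2, h1, h3.symm⟩

lemma reach_eq_comp (hl : ∀ x, T.IsLeaf x → T.hgt x = h) {d : ℝ} {m : V}
    (hm : m ∈ T.Mset d) :
    T.R d ∩ {u | Relation.ReflTransGen (T.adjIn (T.R d)) m u} = T.comp m := by
  ext u
  constructor
  · rintro ⟨_, hu⟩
    exact comp_of_reach h hl hm hu
  · intro hu
    exact ⟨comp_subset_R h hl hm.1 hu, reach_of_comp h hl hm.1 hu⟩

lemma components_eq (hl : ∀ x, T.IsLeaf x → T.hgt x = h) (d : ℝ) :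
    T.components (T.R d) = T.comp '' (T.Mset d) := by
  ext C
  constructor
  · rintro ⟨v, hv, rfl⟩
    obtain ⟨m, hm, hmv⟩ := exists_mroot h hl hv
    refine ⟨m, hm, ?_⟩
    have hmvreach : Relation.ReflTransGen (T.adjIn (T.R d)) m v :=
      reach_of_comp h hl hm.1 hmv
    have hsymm : Relation.ReflTransGen (T.adjIn (T.R d)) v m :=
      by
        haveI : Std.Symm (T.adjIn (T.R d)) := ⟨fun a b hab => adjIn_symm hab⟩
        exact Std.Symm.symm _ _ hmvreach
    rw [← reach_eq_comp h hl hm]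
    ext u
    simp only [Set.mem_inter_iff, Set.mem_setOf_eq, and_congr_right_iff]
    intro _
    constructor
    · intro huv; exact Relation.ReflTransGen.trans hsymm huv
    · intro hum; exact Relation.ReflTransGen.trans hmvreach hum
  · rintro ⟨m, hm, rfl⟩
    exact ⟨m, hm.1, (reach_eq_comp h hl hm).symm⟩

lemma comp_injOn (hl : ∀ x, T.IsLeaf x → T.hgt x = h) (d : ℝ) :
    Set.InjOn T.comp (T.Mset d) := by
  intro m₁ h₁ m₂ h₂ heq
  have : m₂ ∈ T.comp m₁ := heq ▸ T.anc_refl m₂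
  exact mroot_unique h hl h₁ h₂ this (T.anc_refl m₂)

lemma ccount_eq_ncard_mset (hl : ∀ x, T.IsLeaf x → T.hgt x = h) (d : ℝ) :
    T.ccount d = (T.Mset d).ncard := by
  rw [ccount, components_eq h hl d, Set.ncard_image_of_injOn (comp_injOn h hl d)]

lemma branchDist_spec (hl : ∀ x, T.IsLeaf x → T.hgt x = h) {k : ℕ}
    (hbv : T.IsBranchingValue k) :
    0 ≤ T.branchDist k ∧ T.ccount (T.branchDist k) = k := by
  classical
  set S : Set ℝ := {d | 0 ≤ d ∧ T.ccount d = k} with hS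
  have hne : S.Nonempty := hbv
  have hbdd : BddBelow S := ⟨0, fun x hx => hx.1⟩
  have hd0 : 0 ≤ sInf S := le_csInf hne (fun b hb => hb.1)
  refine ⟨hd0, ?_⟩
  set Δ' : Finset ℝ :=
    (Finset.univ.image (fun v : V => h - T.hgt v)).filter (fun r => sInf S < r) with hΔ'
  have hε : ∃ ε : ℝ, 0 < ε ∧ ∀ v : V, sInf S < h - T.hgt v → sInf S + ε ≤ h - T.hgt v := by
    by_cases hΔne : Δ'.Nonempty
    · refine ⟨Δ'.min' hΔne - sInf S, ?_, ?_⟩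
      · have := Δ'.min'_mem hΔne
        simp only [hΔ', Finset.mem_filter] at this
        linarith [this.2]
      · intro v hv
        have hmem : h - T.hgt v ∈ Δ' := by
          simp [hΔ', hv]
        have := Δ'.min'_le _ hmem
        linarith
    · exact ⟨1, one_pos, fun v hv => (hΔne ⟨h - T.hgt v, by simp [hΔ', hv]⟩).elim⟩
  obtain ⟨ε, hεpos, hεprop⟩ := hε
  obtain ⟨dε, hdε, hdεlt⟩ : ∃ a ∈ S, a < sInf S + ε := by
    by_contra hcon
    push_neg at hcon
    have : sInf S + ε ≤ sInf S := le_csInf hne hcon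
    linarith
  have hle : sInf S ≤ dε := csInf_le hbdd hdε
  have hReq : T.R (sInf S) = T.R dε := by
    ext v
    rw [mem_R_iff h hl, mem_R_iff h hl]
    constructor
    · intro hv; linarith
    · intro hv
      by_contra hcon
      push_neg at hcon
      have := hεprop v hcon
      linarith
  have : T.ccount (sInf S) = T.ccount dε := by
    rw [ccount, ccount, hReq]
    
  rw [branchDist, ← hS, this]
  exact hdε.2


lemma root_not_mem_R (hl : ∀ x, T.IsLeaf x → T.hgt x = h) {d : ℝ} {m₁ m₂ : V}
    (hm₁ : m₁ ∈ T.Mset d) (hm₂ : m₂ ∈ T.Mset d) (hne : m₁ ≠ m₂) :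
    ¬ (h ≤ d) := by
  intro hhd
  have hall : ∀ m, m ∈ T.Mset d → m = T.root := by
    intro m hm
    by_contra hmr
    obtain ⟨p, hp⟩ := Option.isSome_iff_exists.mp (T.parent_isSome m hmr)
    apply hm.2 p hp
    rw [mem_R_iff h hl]
    have := T.hgt_nonneg p
    linarith
  exact hne ((hall m₁ hm₁).trans (hall m₂ hm₂).symm)

lemma leaf_mem_R (hl : ∀ x, T.IsLeaf x → T.hgt x = h) {d : ℝ} (hd : 0 ≤ d)
    {x : V} (hx : T.IsLeaf x) : x ∈ T.R d := by
  rw [mem_R_iff h hl, hl x hx]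
  linarith

/-- The exchange lemma: swapping a doubled leaf into an empty component
strictly increases PD. -/
lemma exchange (hl : ∀ x, T.IsLeaf x → T.hgt x = h) {d : ℝ} (hd : 0 ≤ d)
    {Y : Set V} (hY : Y ⊆ T.leaves)
    {m₁ m₂ : V} (hm₁ : m₁ ∈ T.Mset d) (hm₂ : m₂ ∈ T.Mset d) (hne : m₁ ≠ m₂)
    (hempty : Y ∩ T.comp m₁ = ∅)
    {y y₂ : V} (hy : y ∈ Y ∩ T.comp m₂) (hy₂ : y₂ ∈ Y ∩ T.comp m₂) (hyne : y ≠ y₂) :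
    ∃ a', T.IsLeaf a' ∧ a' ∈ T.comp m₁ ∧ a' ∉ Y ∧
      T.PD Y < T.PD (insert a' (Y \ {y})) := by
  obtain ⟨a', ha'leaf, ha'anc⟩ := T.exists_leaf_desc m₁
  have ha'comp : a' ∈ T.comp m₁ := ha'anc
  have ha'Y : a' ∉ Y := fun hmem => by
    have : a' ∈ Y ∩ T.comp m₁ := ⟨hmem, ha'comp⟩
    rw [hempty] at this; exact this
  have hdh : d < h := lt_of_not_ge (root_not_mem_R h hl hm₁ hm₂ hne)
  have hyleaf : T.IsLeaf y := hY hy.1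
  have hy₂leaf : T.IsLeaf y₂ := hY hy₂.1
  set Y0 : Set V := Y \ {y} with hY0
  have hy₂0 : y₂ ∈ Y0 := ⟨hy₂.1, fun hc => hyne (by simpa using hc.symm)⟩
  obtain ⟨zy, hzy, hzymax⟩ := T.exists_zmax y Y0
  obtain ⟨za, hza, hzamax⟩ := T.exists_zmax a' Y0
  -- lower bound for hgt zy
  have hm₂Z : m₂ ∈ T.Zset y Y0 :=
    ⟨hy.2, Or.inr ⟨y₂, hy₂0, hy₂leaf, hy₂.2⟩⟩
  have hzy_lb : h - d ≤ T.hgt zy := by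
    have h1 := hzymax m₂ hm₂Z
    have h2 := (mem_R_iff h hl d m₂).mp hm₂.1
    linarith
  -- upper bound for hgt za
  have hza_ub : T.hgt za < h - d := by
    by_contra hcon
    push_neg at hcon
    have hzaR : za ∈ T.R d := by
      rw [mem_R_iff h hl]; linarith
    obtain ⟨m, hm, hmza⟩ := exists_mroot h hl hzaR
    have hmm₁ : m = m₁ :=
      mroot_unique h hl hm hm₁ (T.anc_trans hmza hza.1) ha'anc
    rcases hza.2 with hroot | ⟨x, hx0, hxleaf, hzax⟩
    · rw [hroot] at hcon
      rw [T.hgt_root] at hcon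
      linarith
    · have hxcomp : x ∈ T.comp m₁ := hmm₁ ▸ (T.anc_trans hmza hzax)
      have : x ∈ Y ∩ T.comp m₁ := ⟨hx0.1, hxcomp⟩
      rw [hempty] at this; exact this
  refine ⟨a', ha'leaf, ha'comp, ha'Y, ?_⟩
  have hYeq : Y = insert y Y0 := by
    rw [hY0, Set.insert_diff_singleton, Set.insert_eq_self.mpr hy.1]
  have e1 : T.PD (insert y Y0) = T.PD Y0 + (T.hgt y - T.hgt zy) :=
    T.PD_insert hyleaf Y0 hzy hzymax
  have e2 : T.PD (insert a' Y0) = T.PD Y0 + (T.hgt a' - T.hgt za) :=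
    T.PD_insert ha'leaf Y0 hza hzamax
  rw [hYeq, e1, e2, hl y hyleaf, hl a' ha'leaf]
  linarith

/-- The swap lemma: replacing the unique representative of a component by any
other leaf of that component leaves PD unchanged. -/
lemma swap_eq (hl : ∀ x, T.IsLeaf x → T.hgt x = h) {d : ℝ} (hd : 0 ≤ d)
    {A : Set V} (hA : A ⊆ T.leaves)
    {m₀ : V} (hm₀ : m₀ ∈ T.Mset d) {a a'' : V} (hAc : A ∩ T.comp m₀ = {a})
    (ha : a ∈ A)
    (ha'' : T.IsLeaf a'') (ha''c : a'' ∈ T.comp m₀) (hne : a'' ≠ a) :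
    T.PD A = T.PD (insert a'' (A \ {a})) := by
  have haleaf : T.IsLeaf a := hA ha
  have hacomp : a ∈ T.comp m₀ := by
    have : a ∈ ({a} : Set V) := rfl
    rw [← hAc] at this; exact this.2
  set A0 : Set V := A \ {a} with hA0
  -- common key: every z in either Zset lies weakly above m₀ or is root-side,
  -- and the two Zsets coincide.
  have hsep : ∀ x ∈ A0, ∀ v, v ∈ T.R d → T.anc v x →
      (T.anc v a ∨ T.anc v a'') → False := by
    rintro x hx v hvR hvx hva
    obtain ⟨m, hm, hmv⟩ := exists_mroot h hl hvR
    have hmm₀ : m = m₀ := by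
      rcases hva with hva | hva
      · exact mroot_unique h hl hm hm₀ (T.anc_trans hmv hva) hacomp
      · exact mroot_unique h hl hm hm₀ (T.anc_trans hmv hva) ha''c
    have hxcomp : x ∈ T.comp m₀ := hmm₀ ▸ (T.anc_trans hmv hvx)
    have : x ∈ A ∩ T.comp m₀ := ⟨hx.1, hxcomp⟩
    rw [hAc] at this
    exact hx.2 this
  have hbelow : ∀ v, (T.anc v a ∨ T.anc v a'') →
      (v = T.root ∨ v ∈ T.ancSet A0) → T.anc v m₀ := by
    intro v hva hvor
    rcases hvor with rfl | ⟨x, hx, hxl, hvx⟩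
    · exact T.anc_root m₀
    · by_cases hvR : v ∈ T.R d
      · exact (hsep x hx v hvR hvx hva).elim
      · have hv1 : ¬ (h - T.hgt v ≤ d) := fun hc => hvR ((mem_R_iff h hl d v).mpr hc)
        have hv2 : h - T.hgt m₀ ≤ d := (mem_R_iff h hl d m₀).mp hm₀.1
        have hvlt : T.hgt v < T.hgt m₀ := by
          push_neg at hv1; linarith
        rcases hva with hva | hva
        · rcases T.anc_comparable hva hacomp with h1 | h1
          · exact h1
          · exact absurd (T.hgt_le_of_anc h1) (not_le.mpr hvlt)
        · rcases T.anc_comparable hva ha''c with h1 | h1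
          · exact h1
          · exact absurd (T.hgt_le_of_anc h1) (not_le.mpr hvlt)
  have hZeq : T.Zset a A0 = T.Zset a'' A0 := by
    ext v
    simp only [Zset, Set.mem_setOf_eq]
    constructor
    · rintro ⟨hva, hor⟩
      exact ⟨T.anc_trans (hbelow v (Or.inl hva) hor) ha''c, hor⟩
    · rintro ⟨hva, hor⟩
      exact ⟨T.anc_trans (hbelow v (Or.inr hva) hor) hacomp, hor⟩
  obtain ⟨z, hz, hzmax⟩ := T.exists_zmax a A0
  have hz'' : z ∈ T.Zset a'' A0 := by rw [← hZeq]; exact hz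
  have hzmax'' : ∀ v ∈ T.Zset a'' A0, T.hgt v ≤ T.hgt z := by
    intro v hv; rw [← hZeq] at hv; exact hzmax v hv
  have e1 : T.PD (insert a A0) = T.PD A0 + (T.hgt a - T.hgt z) :=
    T.PD_insert haleaf A0 hz hzmax
  have e2 : T.PD (insert a'' A0) = T.PD A0 + (T.hgt a'' - T.hgt z) :=
    T.PD_insert ha'' A0 hz'' hzmax''
  have hAeq : insert a A0 = A := by
    rw [hA0, Set.insert_diff_singleton, Set.insert_eq_self.mpr ha]
  rw [← hAeq, e1, e2, hl a haleaf, hl a'' ha'']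

end Components

end Aux


end PhyloTree

open PhyloTree

/-- Corollary 1 of the paper.  If `k` is a branching value of
an ultrametric rooted phylogenetic tree `T`, then a set `A` of `k` leaves is a
size-`k` maxPD set if and only if `A` contains exactly one leaf from each
component of `T[R(d_k)]`. -/
theorem isMaxPD_iff_one_per_component
    {V : Type} [Fintype V] [DecidableEq V] (T : PhyloTree V)
    (hU : T.Ultrametric) (A : Set V) (hA : A ⊆ T.leaves) (k : ℕ)
    (hcard : A.ncard = k) (hbv : T.IsBranchingValue k) :
    T.IsMaxPD k A ↔
      ∀ C ∈ T.components (T.R (T.branchDist k)), (A ∩ C).ncard = 1 := by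
  classical
  obtain ⟨x₀, hx₀, _⟩ := T.exists_leaf_desc T.root
  set h : ℝ := T.hgt x₀ with hh
  have hl : ∀ x, T.IsLeaf x → T.hgt x = h := fun x hx => hU x x₀ hx hx₀
  set d : ℝ := T.branchDist k with hd
  have hd0 : 0 ≤ d := (branchDist_spec h hl hbv).1
  have hcc : T.ccount d = k := (branchDist_spec h hl hbv).2
  have hRHS : (∀ C ∈ T.components (T.R d), (A ∩ C).ncard = 1) ↔
      (∀ m ∈ T.Mset d, (A ∩ T.comp m).ncard = 1) := by
    rw [components_eq h hl d]
    constructor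
    · intro hC m hm; exact hC _ ⟨m, hm, rfl⟩
    · rintro hm C ⟨m, hmm, rfl⟩; exact hm m hmm
  rw [hRHS]
  have hMfin : (T.Mset d).Finite := Set.toFinite _
  set MF : Finset V := hMfin.toFinset with hMF
  have hMmem : ∀ m, m ∈ MF ↔ m ∈ T.Mset d := fun m => hMfin.mem_toFinset
  have hMcard : MF.card = k := by
    rw [hMF, ← Set.ncard_eq_toFinset_card, ← ccount_eq_ncard_mset h hl d]
    exact hcc
  -- the component-root function on leaves
  have hrho : ∀ x, T.IsLeaf x → ∃ m, m ∈ T.Mset d ∧ T.anc m x :=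
    fun x hx => exists_mroot h hl (leaf_mem_R h hl hd0 hx)
  set ρ : V → V := fun x =>
    if hx : T.IsLeaf x then (hrho x hx).choose else T.root with hρ
  have hρ1 : ∀ x (hx : T.IsLeaf x), ρ x ∈ T.Mset d ∧ T.anc (ρ x) x := by
    intro x hx
    rw [hρ]
    simp only [dif_pos hx]
    exact (hrho x hx).choose_spec
  have hρ2 : ∀ x, T.IsLeaf x → ∀ m ∈ T.Mset d, (x ∈ T.comp m ↔ ρ x = m) := by
    intro x hx m hm
    constructor
    · intro hxm; exact mroot_unique h hl (hρ1 x hx).1 hm (hρ1 x hx).2 hxm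
    · rintro rfl; exact (hρ1 x hx).2
  -- fiber counting
  have hfib : ∀ (Y : Set V), Y ⊆ T.leaves → ∀ m ∈ MF,
      (Y ∩ T.comp m).ncard =
        ((Set.toFinite Y).toFinset.filter (fun x => ρ x = m)).card := by
    intro Y hY m hm
    rw [← Set.ncard_coe_finset]
    congr 1
    ext x
    simp only [Finset.coe_filter, Set.Finite.mem_toFinset, Set.mem_setOf_eq,
      Set.mem_inter_iff]
    constructor
    · rintro ⟨hxY, hxc⟩
      exact ⟨hxY, (hρ2 x (hY hxY) m ((hMmem m).mp hm)).mp hxc⟩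
    · rintro ⟨hxY, hxρ⟩
      exact ⟨hxY, (hρ2 x (hY hxY) m ((hMmem m).mp hm)).mpr hxρ⟩
  have hsum : ∀ (Y : Set V), Y ⊆ T.leaves →
      ∑ m ∈ MF, (Y ∩ T.comp m).ncard = Y.ncard := by
    intro Y hY
    have hmem : ∀ x ∈ (Set.toFinite Y).toFinset, ρ x ∈ MF := by
      intro x hx
      rw [Set.Finite.mem_toFinset] at hx
      rw [hMmem]
      exact (hρ1 x (hY hx)).1
    rw [Finset.sum_congr rfl (fun m hm => hfib Y hY m hm),
      ← Finset.card_eq_sum_card_fiberwise hmem,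
      ← Set.ncard_coe_finset, Set.Finite.coe_toFinset]
  -- pigeonhole
  have hpigeon1 : ∀ (c : V → ℕ), (∑ m ∈ MF, c m = k) → (∀ m ∈ MF, 1 ≤ c m) →
      ∀ m ∈ MF, c m = 1 := by
    intro c hsumc hge m hm
    by_contra hne1
    have hlt : MF.card < ∑ m ∈ MF, c m := by
      calc MF.card = ∑ _m ∈ MF, 1 := by rw [Finset.card_eq_sum_ones]
      _ < ∑ m ∈ MF, c m := by
          refine Finset.sum_lt_sum (fun i hi => hge i hi) ⟨m, hm, ?_⟩
          have := hge m hm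
          omega
    rw [hMcard, hsumc] at hlt
    exact lt_irrefl k hlt
  have hpigeon2 : ∀ (c : V → ℕ), (∑ m ∈ MF, c m = k) →
      (∃ m₀ ∈ MF, c m₀ = 0) → ∃ m₂ ∈ MF, 2 ≤ c m₂ := by
    rintro c hsumc ⟨m₀, hm₀, hc0⟩
    by_contra hcon
    push_neg at hcon
    have h1 : ∑ m ∈ MF, c m = ∑ m ∈ MF.erase m₀, c m := by
      rw [← Finset.add_sum_erase MF c hm₀, hc0, zero_add]
    have h2 : ∑ m ∈ MF.erase m₀, c m ≤ ∑ _m ∈ MF.erase m₀, 1 :=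
      Finset.sum_le_sum (fun i hi => by
        have := hcon i (Finset.mem_of_mem_erase hi); omega)
    have h3 : ∑ _m ∈ MF.erase m₀, (1:ℕ) = MF.card - 1 := by
      rw [← Finset.card_eq_sum_ones, Finset.card_erase_of_mem hm₀]
    have h4 : 1 ≤ MF.card := Finset.card_pos.mpr ⟨m₀, hm₀⟩
    omega
  -- the improvement step
  have himprove : ∀ (Y : Set V), Y ⊆ T.leaves → Y.ncard = k →
      (∃ m₁ ∈ MF, Y ∩ T.comp m₁ = ∅) →
      ∃ Y', Y' ⊆ T.leaves ∧ Y'.ncard = k ∧ T.PD Y < T.PD Y' ∧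
        (MF.filter (fun m => Y' ∩ T.comp m = ∅)).card + 1
          = (MF.filter (fun m => Y ∩ T.comp m = ∅)).card := by
    rintro Y hY hYk ⟨m₁, hm₁MF, hm₁e⟩
    have hsumY : ∑ m ∈ MF, (Y ∩ T.comp m).ncard = k := by
      rw [hsum Y hY]; exact hYk
    obtain ⟨m₂, hm₂MF, hm₂2⟩ := hpigeon2 (fun m => (Y ∩ T.comp m).ncard) hsumY
      ⟨m₁, hm₁MF, by show (Y ∩ T.comp m₁).ncard = 0; rw [hm₁e]; exact Set.ncard_empty V⟩
    have hm₂2' : 2 ≤ (Y ∩ T.comp m₂).ncard := hm₂2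
    obtain ⟨y, y₂, hy, hy₂, hyne⟩ :=
      (Set.one_lt_ncard_iff (Set.toFinite _)).mp (by omega : 1 < (Y ∩ T.comp m₂).ncard)
    have hm₁m₂ : m₁ ≠ m₂ := by
      rintro rfl
      rw [hm₁e, Set.ncard_empty] at hm₂2
      omega
    obtain ⟨a', ha'leaf, ha'c, ha'Y, hPD⟩ :=
      exchange h hl hd0 hY ((hMmem m₁).mp hm₁MF) ((hMmem m₂).mp hm₂MF)
        hm₁m₂ hm₁e hy hy₂ hyne
    have hyY : y ∈ Y := hy.1
    refine ⟨insert a' (Y \ {y}), ?_, ?_, hPD, ?_⟩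
    · rintro x (rfl | hx)
      · exact ha'leaf
      · exact hY hx.1
    · rw [Set.ncard_insert_of_notMem (fun hc => ha'Y hc.1) (Set.toFinite _),
        Set.ncard_diff_singleton_of_mem hyY, hYk]
      have : 0 < Y.ncard := (Set.ncard_pos (Set.toFinite _)).mpr ⟨y, hyY⟩
      omega
    · have ha'm : ∀ m ∈ T.Mset d, a' ∈ T.comp m → m = m₁ := fun m hm hc =>
        mroot_unique h hl hm ((hMmem m₁).mp hm₁MF) hc ha'c
      have hym : ∀ m ∈ T.Mset d, y ∈ T.comp m → m = m₂ := fun m hm hc =>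
        mroot_unique h hl hm ((hMmem m₂).mp hm₂MF) hc hy.2
      have hfilter : MF.filter (fun m => insert a' (Y \ {y}) ∩ T.comp m = ∅) =
          (MF.filter (fun m => Y ∩ T.comp m = ∅)).erase m₁ := by
        ext m
        simp only [Finset.mem_filter, Finset.mem_erase]
        constructor
        · rintro ⟨hmMF, he⟩
          have hmne : m ≠ m₁ := by
            rintro rfl
            have : a' ∈ insert a' (Y \ {y}) ∩ T.comp m := ⟨Set.mem_insert _ _, ha'c⟩
            rw [he] at this; exact this
          refine ⟨hmne, hmMF, ?_⟩
          ext u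
          simp only [Set.mem_inter_iff, Set.mem_empty_iff_false, iff_false]
          rintro ⟨huY, huc⟩
          by_cases huy : u = y
          · have hycm : y ∈ T.comp m := huy ▸ huc
            have hmm₂ : m = m₂ := hym m ((hMmem m).mp hmMF) hycm
            have hy₂mem : y₂ ∈ insert a' (Y \ {y}) ∩ T.comp m := by
              refine ⟨Set.mem_insert_of_mem _
                ⟨hy₂.1, fun hc => hyne (Set.mem_singleton_iff.mp hc).symm⟩, ?_⟩
              rw [hmm₂]; exact hy₂.2
            rw [he] at hy₂mem; exact hy₂mem
          · have : u ∈ insert a' (Y \ {y}) ∩ T.comp m :=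
              ⟨Set.mem_insert_of_mem _ ⟨huY, huy⟩, huc⟩
            rw [he] at this; exact this
        · rintro ⟨hmne, hmMF, he⟩
          refine ⟨hmMF, ?_⟩
          ext u
          simp only [Set.mem_inter_iff, Set.mem_empty_iff_false, iff_false]
          rintro ⟨hu, huc⟩
          rcases hu with rfl | ⟨huY, _⟩
          · exact hmne (ha'm m ((hMmem m).mp hmMF) huc)
          · have : u ∈ Y ∩ T.comp m := ⟨huY, huc⟩
            rw [he] at this; exact this
      rw [hfilter]
      have hm₁filter : m₁ ∈ MF.filter (fun m => Y ∩ T.comp m = ∅) := by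
        simp only [Finset.mem_filter]; exact ⟨hm₁MF, hm₁e⟩
      rw [Finset.card_erase_of_mem hm₁filter]
      have := Finset.card_pos.mpr ⟨m₁, hm₁filter⟩
      omega
  constructor
  · -- maxPD → one per component
    intro hmax
    by_contra hcon
    push_neg at hcon
    obtain ⟨m, hmM, hm1⟩ := hcon
    have hempty : ∃ m₁ ∈ MF, A ∩ T.comp m₁ = ∅ := by
      by_contra hcon2
      push_neg at hcon2
      have hsumA : ∑ m ∈ MF, (A ∩ T.comp m).ncard = k := by
        rw [hsum A hA]; exact hcard
      have hge : ∀ m ∈ MF, 1 ≤ (A ∩ T.comp m).ncard := by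
        intro m' hm'
        exact (Set.ncard_pos (Set.toFinite _)).mpr (hcon2 m' hm')
      exact hm1 (hpigeon1 (fun m => (A ∩ T.comp m).ncard) hsumA hge m
        ((hMmem m).mpr hmM))
    obtain ⟨Y', hY'leaves, hY'k, hY'PD, _⟩ := himprove A hA hcard hempty
    exact absurd (hmax.2.2 Y' hY'leaves hY'k) (not_le.mpr hY'PD)
  · -- one per component → maxPD
    intro hone
    -- equality of PD on one-per-component sets
    have eqPD : ∀ (n : ℕ) (A' : Set V), A' ⊆ T.leaves → A'.ncard = k →
        (∀ m ∈ T.Mset d, (A' ∩ T.comp m).ncard = 1) →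
        (A' \ A).ncard = n → T.PD A' = T.PD A := by
      intro n
      induction n with
      | zero =>
        intro A' h1 h2 _h3 h4
        have hsub : A' ⊆ A :=
          Set.diff_eq_empty.mp ((Set.ncard_eq_zero (Set.toFinite _)).mp h4)
        have : A' = A :=
          Set.eq_of_subset_of_ncard_le hsub (by rw [h2, hcard]) (Set.toFinite _)
        rw [this]
      | succ n ih =>
        intro A' h1 h2 h3 h4
        obtain ⟨x, hx⟩ : (A' \ A).Nonempty :=
          Set.nonempty_of_ncard_ne_zero (by omega)
        have hxA' : x ∈ A' := hx.1
        have hxleaf : T.IsLeaf x := h1 hxA'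
        obtain ⟨hm₀M, hxcomp⟩ := hρ1 x hxleaf
        set m₀ : V := ρ x
        have hA'c : A' ∩ T.comp m₀ = {x} := by
          obtain ⟨b, hb⟩ := Set.ncard_eq_one.mp (h3 m₀ hm₀M)
          have hxmem : x ∈ A' ∩ T.comp m₀ := ⟨hxA', hxcomp⟩
          rw [hb] at hxmem
          have hxb : x = b := hxmem
          rw [← hxb] at hb
          exact hb
        obtain ⟨a₀, ha₀⟩ := Set.ncard_eq_one.mp (hone m₀ hm₀M)
        have ha₀mem : a₀ ∈ A ∩ T.comp m₀ := by rw [ha₀]; rfl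
        have ha₀A : a₀ ∈ A := ha₀mem.1
        have ha₀comp : a₀ ∈ T.comp m₀ := ha₀mem.2
        have ha₀leaf : T.IsLeaf a₀ := hA ha₀A
        have ha₀x : a₀ ≠ x := fun hc => hx.2 (hc ▸ ha₀A)
        have hswap := swap_eq h hl hd0 h1 hm₀M hA'c hxA' ha₀leaf ha₀comp ha₀x
        set A'' : Set V := insert a₀ (A' \ {x}) with hA''
        have ha₀A' : a₀ ∉ A' := by
          intro hc
          have : a₀ ∈ ({x} : Set V) := hA'c ▸ ⟨hc, ha₀comp⟩
          exact ha₀x this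
        have h1'' : A'' ⊆ T.leaves := by
          rintro u (rfl | hu)
          · exact ha₀leaf
          · exact h1 hu.1
        have h2'' : A''.ncard = k := by
          rw [hA'', Set.ncard_insert_of_notMem (fun hc => ha₀A' hc.1)
            (Set.toFinite _),
            Set.ncard_diff_singleton_of_mem hxA', h2]
          have : 0 < A'.ncard := (Set.ncard_pos (Set.toFinite _)).mpr ⟨x, hxA'⟩
          omega
        have h3'' : ∀ m ∈ T.Mset d, (A'' ∩ T.comp m).ncard = 1 := by
          intro m hm
          by_cases hmm : m = m₀
          · rw [hmm]
            have : A'' ∩ T.comp m₀ = {a₀} := by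
              ext u
              simp only [hA'', Set.mem_inter_iff, Set.mem_insert_iff,
                Set.mem_diff, Set.mem_singleton_iff]
              constructor
              · rintro ⟨rfl | ⟨huA', hux⟩, huc⟩
                · rfl
                · have : u ∈ ({x} : Set V) := hA'c ▸ ⟨huA', huc⟩
                  exact absurd this hux
              · rintro rfl
                exact ⟨Or.inl rfl, ha₀comp⟩
            rw [this, Set.ncard_singleton]
          · have hxnc : x ∉ T.comp m := fun hc =>
              hmm (mroot_unique h hl hm hm₀M hc hxcomp)
            have ha₀nc : a₀ ∉ T.comp m := fun hc =>
              hmm (mroot_unique h hl hm hm₀M hc ha₀comp)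
            have : A'' ∩ T.comp m = A' ∩ T.comp m := by
              ext u
              simp only [hA'', Set.mem_inter_iff, Set.mem_insert_iff,
                Set.mem_diff, Set.mem_singleton_iff]
              constructor
              · rintro ⟨rfl | ⟨huA', _⟩, huc⟩
                · exact absurd huc ha₀nc
                · exact ⟨huA', huc⟩
              · rintro ⟨huA', huc⟩
                refine ⟨Or.inr ⟨huA', ?_⟩, huc⟩
                rintro rfl
                exact hxnc huc
            rw [this]
            exact h3 m hm
        have h4'' : (A'' \ A).ncard = n := by
          have hset : A'' \ A = (A' \ A) \ {x} := by
            ext u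
            simp only [hA'', Set.mem_diff, Set.mem_insert_iff,
              Set.mem_singleton_iff]
            constructor
            · rintro ⟨rfl | ⟨huA', hux⟩, huA⟩
              · exact absurd ha₀A huA
              · exact ⟨⟨huA', huA⟩, hux⟩
            · rintro ⟨⟨huA', huA⟩, hux⟩
              exact ⟨Or.inr ⟨huA', hux⟩, huA⟩
          rw [hset, Set.ncard_diff_singleton_of_mem hx, h4]
          omega
        rw [hswap]
        exact ih A'' h1'' h2'' h3'' h4''
    -- main induction on the number of missed components
    have key : ∀ (n : ℕ) (Y : Set V), Y ⊆ T.leaves → Y.ncard = k →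
        (MF.filter (fun m => Y ∩ T.comp m = ∅)).card = n → T.PD Y ≤ T.PD A := by
      intro n
      induction n with
      | zero =>
        intro Y h1 h2 h3
        have hfe : MF.filter (fun m => Y ∩ T.comp m = ∅) = ∅ :=
          Finset.card_eq_zero.mp h3
        have hge : ∀ m ∈ MF, 1 ≤ (Y ∩ T.comp m).ncard := by
          intro m hm
          have : Y ∩ T.comp m ≠ ∅ := by
            intro hc
            have : m ∈ MF.filter (fun m => Y ∩ T.comp m = ∅) := by
              simp only [Finset.mem_filter]; exact ⟨hm, hc⟩
            rw [hfe] at this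
            exact absurd this (Finset.notMem_empty m)
          exact (Set.ncard_pos (Set.toFinite _)).mpr
            (Set.nonempty_iff_ne_empty.mpr this)
        have hsumY : ∑ m ∈ MF, (Y ∩ T.comp m).ncard = k := by
          rw [hsum Y h1]; exact h2
        have hall1 := hpigeon1 (fun m => (Y ∩ T.comp m).ncard) hsumY hge
        exact le_of_eq (eqPD (Y \ A).ncard Y h1 h2
          (fun m hm => hall1 m ((hMmem m).mpr hm)) rfl)
      | succ n ih =>
        intro Y h1 h2 h3
        have hne : (MF.filter (fun m => Y ∩ T.comp m = ∅)).Nonempty := by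
          rw [← Finset.card_pos, h3]; omega
        obtain ⟨m₁, hm₁⟩ := hne
        simp only [Finset.mem_filter] at hm₁
        obtain ⟨Y', hY'1, hY'2, hY'PD, hY'count⟩ :=
          himprove Y h1 h2 ⟨m₁, hm₁.1, hm₁.2⟩
        have : (MF.filter (fun m => Y' ∩ T.comp m = ∅)).card = n := by omega
        exact le_of_lt (lt_of_lt_of_le hY'PD (ih Y' hY'1 hY'2 this))
    exact ⟨hA, hcard, fun Y hY hYk => key _ Y hY hYk rfl⟩
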